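/- Let A = K[x,y]/(x², y²) with maximal ideal m = (x, y), and let W = span_K{x, y}; then (A, W) is an H-pair of degree 2, with boundary set B = {z ∈ m : z ≠ 0 and z² ∈ W}. Every element of B is W-equivalent to exactly one of the three elements x, y, xy; in particular B has exactly three W-equivalence classes. -/

import Mathlib

/-- The exponential of an element of a finite-dimensional `K`-algebra:
`exp a = ∑_{i ≥ 0} a^i / i!`. -/
noncomputable def expn (K : Type*) [Field K] {A : Type*} [CommRing A] [Algebra K A]
    (a : A) : A :=
  ∑ i ∈ Finset.range (Module.finrank K A + 1), ((i.factorial : K)⁻¹) • a ^ i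

/-- The algebra `K[x,y]/(x², y²)`. -/
abbrev SqZero (K : Type*) [Field K] : Type _ :=
  MvPolynomial (Fin 2) K ⧸ Ideal.span
    {(MvPolynomial.X 0 : MvPolynomial (Fin 2) K) ^ 2,
      (MvPolynomial.X 1 : MvPolynomial (Fin 2) K) ^ 2}

/-- The image of `x` in `K[x,y]/(x², y²)`. -/
noncomputable abbrev sqX (K : Type*) [Field K] : SqZero K :=
  Ideal.Quotient.mk _ (MvPolynomial.X 0)

/-- The image of `y` in `K[x,y]/(x², y²)`. -/
noncomputable abbrev sqY (K : Type*) [Field K] : SqZero K :=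
  Ideal.Quotient.mk _ (MvPolynomial.X 1)

set_option synthInstance.maxHeartbeats 1000000
set_option maxHeartbeats 2000000

namespace St13
variable (K : Type*) [Field K]

open TrivSqZeroExt

noncomputable def f0 : MvPolynomial (Fin 2) K →ₐ[K] DualNumber (DualNumber K) :=
  MvPolynomial.aeval (R := K) (S₁ := DualNumber (DualNumber K))
    ![TrivSqZeroExt.inl DualNumber.eps, DualNumber.eps]

lemma f0_ker : ∀ a ∈ Ideal.span
    {(MvPolynomial.X 0 : MvPolynomial (Fin 2) K) ^ 2,
      (MvPolynomial.X 1 : MvPolynomial (Fin 2) K) ^ 2}, f0 K a = 0 := by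
  intro a ha
  have : Ideal.span {(MvPolynomial.X 0 : MvPolynomial (Fin 2) K) ^ 2,
      (MvPolynomial.X 1 : MvPolynomial (Fin 2) K) ^ 2} ≤ RingHom.ker (f0 K).toRingHom := by
    rw [Ideal.span_le]
    rintro p (rfl | rfl) <;>
      · simp only [SetLike.mem_coe, RingHom.mem_ker, AlgHom.toRingHom_eq_coe,
          RingHom.coe_coe, map_pow, f0, MvPolynomial.aeval_X]
        simp [pow_two, TrivSqZeroExt.inl_mul_inl, DualNumber.eps_mul_eps]
  exact this ha

noncomputable def phi : SqZero K →ₐ[K] DualNumber (DualNumber K) :=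
  Ideal.Quotient.liftₐ _ (f0 K) (f0_ker K)

@[simp] lemma phi_X : phi K (sqX K) = TrivSqZeroExt.inl DualNumber.eps := by
  show f0 K (MvPolynomial.X 0) = _
  simp [f0]

@[simp] lemma phi_Y : phi K (sqY K) = DualNumber.eps := by
  show f0 K (MvPolynomial.X 1) = _
  simp [f0]

end St13
namespace St13
variable (K : Type*) [Field K]
open TrivSqZeroExt

lemma hX2 : sqX K ^ 2 = 0 := by
  rw [← map_pow, Ideal.Quotient.eq_zero_iff_mem]
  exact Ideal.subset_span (by simp)

lemma hY2 : sqY K ^ 2 = 0 := by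
  rw [← map_pow, Ideal.Quotient.eq_zero_iff_mem]
  exact Ideal.subset_span (by simp)

noncomputable def E (a b c d : K) : SqZero K :=
  a • (1 : SqZero K) + b • sqX K + c • sqY K + d • (sqX K * sqY K)

lemma hXX : sqX K * sqX K = 0 := by rw [← pow_two]; exact hX2 K
lemma hYY : sqY K * sqY K = 0 := by rw [← pow_two]; exact hY2 K
lemma hXXW (w : SqZero K) : sqX K * (sqX K * w) = 0 := by rw [← mul_assoc, hXX, zero_mul]
lemma hYYW (w : SqZero K) : sqY K * (sqY K * w) = 0 := by rw [← mul_assoc, hYY, zero_mul]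

lemma E_inj {a b c d a' b' c' d' : K} (h : E K a b c d = E K a' b' c' d') :
    a = a' ∧ b = b' ∧ c = c' ∧ d = d' := by
  have h2 := congrArg (fun z => (((phi K z).fst.fst, (phi K z).fst.snd),
    ((phi K z).snd.fst, (phi K z).snd.snd))) h
  simp only [E, map_add, map_smul, map_mul, map_one, phi_X, phi_Y,
    fst_add, snd_add, fst_smul, snd_smul,
    fst_inl, snd_inl, fst_inr, snd_inr, fst_mul, snd_mul, fst_one, snd_one,
    DualNumber.fst_eps, DualNumber.snd_eps, smul_zero, smul_eq_mul, mul_one, mul_zero,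
    zero_add, add_zero, zero_mul, mul_comm, Prod.mk.injEq] at h2
  tauto

@[simp] lemma E_zero_iff {a b c d : K} : E K a b c d = 0 ↔ a = 0 ∧ b = 0 ∧ c = 0 ∧ d = 0 := by
  constructor
  · intro h
    have h0 : (0 : SqZero K) = E K 0 0 0 0 := by simp [E]
    exact E_inj K (h.trans (by rw [h0]))
  · rintro ⟨rfl, rfl, rfl, rfl⟩; simp [E]

lemma smul_E (k a b c d : K) : k • E K a b c d = E K (k*a) (k*b) (k*c) (k*d) := by
  simp only [E, smul_add, smul_smul]

lemma add_E (a b c d a' b' c' d' : K) :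
    E K a b c d + E K a' b' c' d' = E K (a+a') (b+b') (c+c') (d+d') := by
  simp only [E, add_smul]; abel

lemma mul_E (a b c d a' b' c' d' : K) :
    E K a b c d * E K a' b' c' d'
      = E K (a*a') (a*b'+b*a') (a*c'+c*a') (a*d'+b*c'+c*b'+d*a') := by
  have h1 : sqY K * sqX K = sqX K * sqY K := mul_comm _ _
  have h2 : sqX K * (sqX K * sqY K) = 0 := hXXW K _
  have h3 : sqY K * (sqX K * sqY K) = 0 := by rw [mul_left_comm, hYY, mul_zero]
  have h4 : sqX K * sqY K * sqX K = 0 := by rw [mul_assoc, mul_comm (sqY K), hXXW]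
  have h5 : sqX K * sqY K * sqY K = 0 := by rw [mul_assoc, hYY, mul_zero]
  have h6 : sqX K * sqY K * (sqX K * sqY K) = 0 := by rw [mul_assoc, h3, mul_zero]
  simp only [E, add_mul, mul_add, smul_mul_assoc, mul_smul_comm, smul_smul, one_mul, mul_one,
    hXX, hYY, h1, h2, h3, h4, h5, h6, smul_zero, add_zero, zero_add]
  module

lemma E_one : E K 1 0 0 0 = 1 := by simp [E]

lemma E_X : E K 0 1 0 0 = sqX K := by simp [E]
lemma E_Y : E K 0 0 1 0 = sqY K := by simp [E]
lemma E_XY : E K 0 0 0 1 = sqX K * sqY K := by simp [E]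

lemma repr (z : SqZero K) : ∃ a b c d : K, z = E K a b c d := by
  obtain ⟨p, rfl⟩ := Ideal.Quotient.mk_surjective z
  induction p using MvPolynomial.induction_on with
  | C a =>
    refine ⟨a, 0, 0, 0, ?_⟩
    have : (Ideal.Quotient.mk _ (MvPolynomial.C a : MvPolynomial (Fin 2) K))
        = algebraMap K (SqZero K) a := rfl
    simp [E, this, Algebra.algebraMap_eq_smul_one]
  | add p q hp hq =>
    obtain ⟨a, b, c, d, hp⟩ := hp
    obtain ⟨a', b', c', d', hq⟩ := hq
    exact ⟨a+a', b+b', c+c', d+d', by rw [map_add, hp, hq, add_E]⟩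
  | mul_X p i hp =>
    obtain ⟨a, b, c, d, hp⟩ := hp
    rw [map_mul, hp]
    fin_cases i
    · refine ⟨0, a, 0, c, ?_⟩
      show E K a b c d * sqX K = _
      rw [← E_X, mul_E]; ring_nf
    · refine ⟨0, 0, a, b, ?_⟩
      show E K a b c d * sqY K = _
      rw [← E_Y, mul_E]; ring_nf

lemma mem_W_iff {a b c d : K} :
    E K a b c d ∈ Submodule.span K {sqX K, sqY K} ↔ a = 0 ∧ d = 0 := by
  constructor
  · intro h
    obtain ⟨s, t, hst⟩ := Submodule.mem_span_pair.1 h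
    have : E K 0 s t 0 = E K a b c d := by
      rw [← hst, ← E_X, ← E_Y, smul_E, smul_E, add_E]; ring_nf
    obtain ⟨h1, _, _, h4⟩ := E_inj K this
    exact ⟨h1.symm, h4.symm⟩
  · rintro ⟨rfl, rfl⟩
    refine Submodule.mem_span_pair.2 ⟨b, c, ?_⟩
    rw [← E_X, ← E_Y, smul_E, smul_E, add_E]; ring_nf

lemma mem_I_iff {a b c d : K} :
    E K a b c d ∈ Ideal.span {sqX K, sqY K} ↔ a = 0 := by
  constructor
  · intro h
    obtain ⟨p, q, hpq⟩ := Ideal.mem_span_pair.1 h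
    obtain ⟨ap, bp, cp, dp, rfl⟩ := repr K p
    obtain ⟨aq, bq, cq, dq, rfl⟩ := repr K q
    have : E K 0 ap aq (cp + bq) = E K a b c d := by
      rw [← hpq, ← E_X, ← E_Y, mul_E, mul_E, add_E]; ring_nf
    exact ((E_inj K this).1).symm
  · rintro rfl
    refine Ideal.mem_span_pair.2 ⟨E K b 0 d 0, E K c 0 0 0, ?_⟩
    rw [← E_X, ← E_Y, mul_E, mul_E, add_E]; ring_nf

lemma isUnit_E {a : K} (ha : a ≠ 0) (b c d : K) : IsUnit (E K a b c d) := by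
  refine IsUnit.of_mul_eq_one (E K a⁻¹ (-b/a^2) (-c/a^2) ((2*b*c - a*d)/a^3)) ?_
  rw [mul_E, ← E_one]
  congr 1 <;> field_simp <;> ring

lemma cube {z1 z2 z3 : SqZero K} (h1 : z1 ∈ Ideal.span {sqX K, sqY K})
    (h2 : z2 ∈ Ideal.span {sqX K, sqY K}) (h3 : z3 ∈ Ideal.span {sqX K, sqY K}) :
    z1 * z2 * z3 = 0 := by
  obtain ⟨a1, b1, c1, d1, rfl⟩ := repr K z1
  obtain ⟨a2, b2, c2, d2, rfl⟩ := repr K z2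
  obtain ⟨a3, b3, c3, d3, rfl⟩ := repr K z3
  obtain rfl := (mem_I_iff K).1 h1
  obtain rfl := (mem_I_iff K).1 h2
  obtain rfl := (mem_I_iff K).1 h3
  rw [mul_E, mul_E]
  simp

noncomputable def bas : Module.Basis (Fin 4) K (SqZero K) := Module.Basis.mk
  (v := ![1, sqX K, sqY K, sqX K * sqY K])
  (by
    rw [Fintype.linearIndependent_iff]
    intro g hg
    have : E K (g 0) (g 1) (g 2) (g 3) = 0 := by
      rw [← hg, Fin.sum_univ_four]
      simp [E]
    have h4 := (E_zero_iff K).1 this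
    intro i; fin_cases i <;> tauto)
  (by
    rintro z -
    obtain ⟨a, b, c, d, rfl⟩ := repr K z
    have h01 : (1 : SqZero K) ∈ Set.range ![(1 : SqZero K), sqX K, sqY K, sqX K * sqY K] :=
      ⟨0, rfl⟩
    have hxm : sqX K ∈ Set.range ![(1 : SqZero K), sqX K, sqY K, sqX K * sqY K] := ⟨1, rfl⟩
    have hym : sqY K ∈ Set.range ![(1 : SqZero K), sqX K, sqY K, sqX K * sqY K] := ⟨2, rfl⟩
    have hxym : sqX K * sqY K ∈ Set.range ![(1 : SqZero K), sqX K, sqY K, sqX K * sqY K] :=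
      ⟨3, rfl⟩
    exact Submodule.add_mem _ (Submodule.add_mem _ (Submodule.add_mem _
      (Submodule.smul_mem _ _ (Submodule.subset_span h01))
      (Submodule.smul_mem _ _ (Submodule.subset_span hxm)))
      (Submodule.smul_mem _ _ (Submodule.subset_span hym)))
      (Submodule.smul_mem _ _ (Submodule.subset_span hxym)))

lemma finrank_eq : Module.finrank K (SqZero K) = 4 := by
  rw [Module.finrank_eq_card_basis (bas K)]
  simp

lemma expn_E [CharZero K] (p q r : K) :
    expn K (E K 0 p q r) = E K 1 p q (r + p * q) := by
  have h2 : E K 0 p q r ^ 2 = E K 0 0 0 (2 * (p * q)) := by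
    rw [pow_two, mul_E]; congr 1 <;> ring
  have h3 : E K 0 p q r ^ 3 = 0 := by
    rw [pow_succ, h2, mul_E]; simp
  have h4 : E K 0 p q r ^ 4 = 0 := by rw [pow_succ, h3, zero_mul]
  rw [expn, finrank_eq]
  rw [show (4 : ℕ) + 1 = 5 from rfl]
  rw [Finset.sum_range_succ, Finset.sum_range_succ, Finset.sum_range_succ,
    Finset.sum_range_succ, Finset.sum_range_succ, Finset.sum_range_zero]
  rw [h2, h3, h4]
  norm_num [Nat.factorial]
  rw [smul_E, ← E_one, add_E, add_E]
  congr 1 <;> ring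

end St13


open St13 in
set_option synthInstance.maxHeartbeats 1000000 in
set_option maxHeartbeats 2000000 in
theorem stmt_13 (K : Type*) [Field K] [IsAlgClosed K] [CharZero K] :
    (∀ z : SqZero K, IsUnit z ∨ z ∈ Ideal.span {sqX K, sqY K}) ∧
    (Submodule.span K {sqX K, sqY K} ≤ (Ideal.span {sqX K, sqY K}).restrictScalars K) ∧
    Module.finrank K (Submodule.span K {sqX K, sqY K}) = 2 ∧
    Algebra.adjoin K ((Submodule.span K {sqX K, sqY K} :
        Submodule K (SqZero K)) : Set (SqZero K)) = ⊤ ∧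
    ¬ ((Ideal.span {sqX K, sqY K} ^ 2).restrictScalars K ≤ Submodule.span K {sqX K, sqY K}) ∧
    (∀ k : ℕ, 2 < k → (Ideal.span {sqX K, sqY K} ^ k).restrictScalars K
        ≤ Submodule.span K {sqX K, sqY K}) ∧
    (∀ z : SqZero K, z ∈ Ideal.span {sqX K, sqY K} → z ≠ 0 →
        z ^ 2 ∈ Submodule.span K {sqX K, sqY K} →
        ∃! w : SqZero K, w ∈ ({sqX K, sqY K, sqX K * sqY K} : Set (SqZero K)) ∧
          ∃ u ∈ Submodule.span K {sqX K, sqY K},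
            ∃ lam : K, lam ≠ 0 ∧ expn K u * z = lam • w) := by
  refine ⟨?_, ?_, ?_, ?_, ?_, ?_, ?_⟩
  · -- local ring
    intro z
    obtain ⟨a, b, c, d, rfl⟩ := repr K z
    by_cases ha : a = 0
    · subst ha; exact Or.inr ((mem_I_iff K).2 rfl)
    · exact Or.inl (isUnit_E K ha b c d)
  · -- W ≤ I
    intro z hz
    obtain ⟨a, b, c, d, rfl⟩ := repr K z
    obtain ⟨rfl, rfl⟩ := (mem_W_iff K).1 hz
    exact (mem_I_iff K).2 rfl
  · -- finrank W = 2
    have hli : LinearIndependent K ![sqX K, sqY K] := by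
      rw [Fintype.linearIndependent_iff]
      intro g hg
      rw [Fin.sum_univ_two] at hg
      simp only [Matrix.cons_val_zero, Matrix.cons_val_one, Matrix.head_cons] at hg
      have hsum : g 0 • sqX K + g 1 • sqY K = E K 0 (g 0) (g 1) 0 := by
        rw [← E_X, ← E_Y, smul_E, smul_E, add_E]
        congr 1 <;> ring
      have h4 := (E_zero_iff K).1 (hsum.symm.trans hg)
      intro i; fin_cases i <;> tauto
    have hsp : ({sqX K, sqY K} : Set (SqZero K)) = Set.range ![sqX K, sqY K] := by
      simp [Matrix.range_cons, Matrix.range_empty]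
      exact Set.pair_comm _ _
    rw [hsp, finrank_span_eq_card hli]
    simp
  · -- adjoin = ⊤
    rw [eq_top_iff]
    rintro z -
    obtain ⟨a, b, c, d, rfl⟩ := repr K z
    have hX : sqX K ∈ Algebra.adjoin K ((Submodule.span K {sqX K, sqY K} :
        Submodule K (SqZero K)) : Set (SqZero K)) :=
      Algebra.subset_adjoin (Submodule.subset_span (by simp))
    have hY : sqY K ∈ Algebra.adjoin K ((Submodule.span K {sqX K, sqY K} :
        Submodule K (SqZero K)) : Set (SqZero K)) :=
      Algebra.subset_adjoin (Submodule.subset_span (by simp))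
    exact add_mem (add_mem (add_mem (Subalgebra.smul_mem _ (one_mem _) a)
      (Subalgebra.smul_mem _ hX b)) (Subalgebra.smul_mem _ hY c))
      (Subalgebra.smul_mem _ (mul_mem hX hY) d)
  · -- ¬ I² ≤ W
    intro h
    have hXY : sqX K * sqY K ∈ Ideal.span {sqX K, sqY K} ^ 2 := by
      have h2 := Ideal.mul_mem_mul (I := Ideal.span {sqX K, sqY K})
        (J := Ideal.span {sqX K, sqY K})
        (Ideal.subset_span (show sqX K ∈ _ by simp))
        (Ideal.subset_span (show sqY K ∈ _ by simp))
      rw [pow_two (Ideal.span ({sqX K, sqY K} : Set (SqZero K)))]; exact h2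
    have := h hXY
    rw [← E_XY] at this
    obtain ⟨-, h1⟩ := (mem_W_iff K).1 this
    exact one_ne_zero h1
  · -- I^k ≤ W for k > 2
    intro k hk z hz
    have h3 : (Ideal.span {sqX K, sqY K} : Ideal (SqZero K)) ^ 3 ≤ ⊥ := by
      have e : (Ideal.span {sqX K, sqY K} : Ideal (SqZero K)) ^ 3
          = Ideal.span {sqX K, sqY K} * Ideal.span {sqX K, sqY K}
            * Ideal.span {sqX K, sqY K} :=
        (pow_succ _ 2).trans (congrArg (· * Ideal.span {sqX K, sqY K}) (pow_two _))
      rw [e, Ideal.mul_le]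
      intro r hr s hs
      rw [Ideal.mem_bot]
      exact Submodule.mul_induction_on hr (fun m hm n hn => cube K hm hn hs)
        (fun x y h1 h2 => by rw [add_mul, h1, h2, add_zero])
    have hz3 : z ∈ (Ideal.span {sqX K, sqY K} : Ideal (SqZero K)) ^ 3 :=
      Ideal.pow_le_pow_right (by omega) hz
    have : z = 0 := by simpa using h3 hz3
    rw [this]; exact zero_mem _
  · -- the three classes
    intro z hzI hz0 hz2
    obtain ⟨a, b, c, d, rfl⟩ := repr K z
    obtain rfl := (mem_I_iff K).1 hzI
    have hbc : b * c = 0 := by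
      have : E K 0 b c d ^ 2 = E K 0 0 0 (2 * (b * c)) := by
        rw [pow_two, mul_E]; congr 1 <;> ring
      rw [this] at hz2
      obtain ⟨-, h1⟩ := (mem_W_iff K).1 hz2
      have h2 : (2 : K) ≠ 0 := two_ne_zero
      rcases mul_eq_zero.1 h1 with h | h
      · exact absurd h h2
      · exact h
    have hkey : ∀ p q : K, expn K (E K 0 p q 0) * E K 0 b c d
        = E K 0 b c (d + p * c + q * b) := by
      intro p q
      rw [expn_E, mul_E]
      congr 1 <;> ring
    have hmemW : ∀ p q : K, E K 0 p q 0 ∈ Submodule.span K {sqX K, sqY K} :=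
      fun p q => (mem_W_iff K).2 ⟨rfl, rfl⟩
    have huform : ∀ u ∈ Submodule.span K {sqX K, sqY K}, ∃ p q : K, u = E K 0 p q 0 := by
      intro u hu
      obtain ⟨p, q, hpq⟩ := Submodule.mem_span_pair.1 hu
      refine ⟨p, q, ?_⟩
      rw [← hpq, ← E_X, ← E_Y, smul_E, smul_E, add_E]
      congr 1 <;> ring
    -- smul forms
    have hsX : ∀ l : K, l • sqX K = E K 0 l 0 0 := by
      intro l; rw [← E_X, smul_E]; congr 1 <;> ring
    have hsY : ∀ l : K, l • sqY K = E K 0 0 l 0 := by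
      intro l; rw [← E_Y, smul_E]; congr 1 <;> ring
    have hsXY : ∀ l : K, l • (sqX K * sqY K) = E K 0 0 0 l := by
      intro l; rw [← E_XY, smul_E]; congr 1 <;> ring
    by_cases hb : b = 0
    · by_cases hc : c = 0
      · -- z = d XY, d ≠ 0
        subst hb; subst hc
        have hd : d ≠ 0 := by
          intro h; exact hz0 (by rw [h]; simp)
        refine ⟨sqX K * sqY K, ⟨by simp, E K 0 0 0 0, hmemW 0 0, d, hd, ?_⟩, ?_⟩
        · rw [hkey, hsXY]; congr 1 <;> ring
        · rintro w' ⟨hw', u', hu', lam', hlam', heq'⟩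
          obtain ⟨p, q, rfl⟩ := huform u' hu'
          rw [hkey] at heq'
          rcases hw' with rfl | rfl | rfl
          · rw [hsX] at heq'
            obtain ⟨-, h1, -, -⟩ := E_inj K heq'
            exact absurd h1.symm hlam'
          · rw [hsY] at heq'
            obtain ⟨-, -, h1, -⟩ := E_inj K heq'
            exact absurd h1.symm hlam'
          · rfl
      · -- c ≠ 0, w = Y
        subst hb
        refine ⟨sqY K, ⟨by simp, E K 0 (-(d/c)) 0 0, hmemW _ 0, c, hc, ?_⟩, ?_⟩
        · rw [hkey, hsY]; congr 1 <;> field_simp <;> ring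
        · rintro w' ⟨hw', u', hu', lam', hlam', heq'⟩
          obtain ⟨p, q, rfl⟩ := huform u' hu'
          rw [hkey] at heq'
          rcases hw' with rfl | rfl | rfl
          · rw [hsX] at heq'
            obtain ⟨-, -, h1, -⟩ := E_inj K heq'
            exact absurd h1 hc
          · rfl
          · rw [hsXY] at heq'
            obtain ⟨-, -, h1, -⟩ := E_inj K heq'
            exact absurd h1 hc
    · -- b ≠ 0, then c = 0, w = X
      have hc : c = 0 := by
        rcases mul_eq_zero.1 hbc with h | h
        · exact absurd h hb
        · exact h
      subst hc
      refine ⟨sqX K, ⟨by simp, E K 0 0 (-(d/b)) 0, hmemW 0 _, b, hb, ?_⟩, ?_⟩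
      · rw [hkey, hsX]; congr 1 <;> field_simp <;> ring
      · rintro w' ⟨hw', u', hu', lam', hlam', heq'⟩
        obtain ⟨p, q, rfl⟩ := huform u' hu'
        rw [hkey] at heq'
        rcases hw' with rfl | rfl | rfl
        · rfl
        · rw [hsY] at heq'
          obtain ⟨-, h1, -, -⟩ := E_inj K heq'
          exact absurd h1 hb
        · rw [hsXY] at heq'
          obtain ⟨-, h1, -, -⟩ := E_inj K heq'
          exact absurd h1 hb
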